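/- Let q be a complex number with |q| = 1 (i.e. q·q̄ = 1). Then there exists a unique star structure ★ₛ on SL_q(2,ℂ) fixing all four generators: a^{★ₛ} = a, b^{★ₛ} = b, c^{★ₛ} = c, d^{★ₛ} = d, and it is a Hopf star structure: Δ(x^{★ₛ}) = (★ₛ ⊗ ★ₛ)(Δ(x)) for all x, where Δ is the matrix comultiplication. (This real form is the quantum group SL_q(2,ℝ).) -/

import Mathlib

noncomputable section

open FreeAlgebra
open scoped TensorProduct

/-- The Manin relations with parameter `q` together with the determinant relation
`a d − q⁻¹ b c = 1`. -/
inductive SLRel (q : ℂ) : FreeAlgebra ℂ (Fin 4) → FreeAlgebra ℂ (Fin 4) → Prop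
  | ab : SLRel q (ι ℂ 0 * ι ℂ 1) (q⁻¹ • (ι ℂ 1 * ι ℂ 0))
  | ac : SLRel q (ι ℂ 0 * ι ℂ 2) (q⁻¹ • (ι ℂ 2 * ι ℂ 0))
  | bd : SLRel q (ι ℂ 1 * ι ℂ 3) (q⁻¹ • (ι ℂ 3 * ι ℂ 1))
  | cd : SLRel q (ι ℂ 2 * ι ℂ 3) (q⁻¹ • (ι ℂ 3 * ι ℂ 2))
  | bc : SLRel q (ι ℂ 1 * ι ℂ 2) (ι ℂ 2 * ι ℂ 1)
  | ad : SLRel q (ι ℂ 0 * ι ℂ 3 - ι ℂ 3 * ι ℂ 0) ((q⁻¹ - q) • (ι ℂ 1 * ι ℂ 2))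
  | det : SLRel q (ι ℂ 0 * ι ℂ 3 - q⁻¹ • (ι ℂ 1 * ι ℂ 2)) 1

/-- `SL_q(2,ℂ)`. -/
abbrev SLq (q : ℂ) := RingQuot (SLRel q)

/-- The images of the generators `a, b, c, d` in `SL_q(2,ℂ)`. -/
def gen (q : ℂ) (i : Fin 4) : SLq q := RingQuot.mkAlgHom ℂ (SLRel q) (ι ℂ i)

/-- A star structure on a complex algebra: additive, conjugate-linear,
antimultiplicative, unital, involutive. -/
def IsStar {A : Type*} [Ring A] [Algebra ℂ A] (st : A → A) : Prop :=
  (∀ x y : A, st (x + y) = st x + st y) ∧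
  (∀ (z : ℂ) (x : A), st (z • x) = (starRingEnd ℂ) z • st x) ∧
  (∀ x y : A, st (x * y) = st y * st x) ∧
  st 1 = 1 ∧
  (∀ x : A, st (st x) = x)

/-- `Δ` is the matrix comultiplication of `SL_q(2,ℂ)`. -/
def IsComul (q : ℂ) (Δ : SLq q →ₐ[ℂ] (SLq q ⊗[ℂ] SLq q)) : Prop :=
  Δ (gen q 0) = gen q 0 ⊗ₜ[ℂ] gen q 0 + gen q 1 ⊗ₜ[ℂ] gen q 2 ∧
  Δ (gen q 1) = gen q 0 ⊗ₜ[ℂ] gen q 1 + gen q 1 ⊗ₜ[ℂ] gen q 3 ∧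
  Δ (gen q 2) = gen q 2 ⊗ₜ[ℂ] gen q 0 + gen q 3 ⊗ₜ[ℂ] gen q 2 ∧
  Δ (gen q 3) = gen q 2 ⊗ₜ[ℂ] gen q 1 + gen q 3 ⊗ₜ[ℂ] gen q 3

/-- The prescribed values of the star structure on the generators. -/
def StarVals (q : ℂ) (st : SLq q → SLq q) : Prop :=
  st (gen q 0) = gen q 0 ∧ st (gen q 1) = gen q 1 ∧
  st (gen q 2) = gen q 2 ∧ st (gen q 3) = gen q 3

namespace SL2R

open MulOpposite RingQuot

variable (q : ℂ)

lemma rel_eq {x y : FreeAlgebra ℂ (Fin 4)} (h : SLRel q x y) :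
    RingQuot.mkAlgHom ℂ (SLRel q) x = RingQuot.mkAlgHom ℂ (SLRel q) y :=
  RingQuot.mkAlgHom_rel ℂ h

lemma relAB : gen q 0 * gen q 1 = q⁻¹ • (gen q 1 * gen q 0) := by
  simpa [gen, map_mul, map_smul] using rel_eq q SLRel.ab
lemma relAC : gen q 0 * gen q 2 = q⁻¹ • (gen q 2 * gen q 0) := by
  simpa [gen, map_mul, map_smul] using rel_eq q SLRel.ac
lemma relBD : gen q 1 * gen q 3 = q⁻¹ • (gen q 3 * gen q 1) := by
  simpa [gen, map_mul, map_smul] using rel_eq q SLRel.bd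
lemma relCD : gen q 2 * gen q 3 = q⁻¹ • (gen q 3 * gen q 2) := by
  simpa [gen, map_mul, map_smul] using rel_eq q SLRel.cd
lemma relBC : gen q 1 * gen q 2 = gen q 2 * gen q 1 := by
  simpa [gen, map_mul] using rel_eq q SLRel.bc
lemma relAD : gen q 0 * gen q 3 - gen q 3 * gen q 0 = (q⁻¹ - q) • (gen q 1 * gen q 2) := by
  simpa [gen, map_mul, map_smul, map_sub] using rel_eq q SLRel.ad
lemma relDET : gen q 0 * gen q 3 - q⁻¹ • (gen q 1 * gen q 2) = 1 := by
  simpa [gen, map_mul, map_smul, map_sub] using rel_eq q SLRel.det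

section hq
variable {q} (hq : q * (starRingEnd ℂ) q = 1)
include hq

lemma hq0 : q ≠ 0 := by
  intro h; rw [h] at hq; simp at hq

lemma conj_q : (starRingEnd ℂ) q = q⁻¹ :=
  eq_inv_of_mul_eq_one_left (by rw [mul_comm] at hq; exact hq)

lemma conj_qinv : (starRingEnd ℂ) q⁻¹ = q := by
  rw [map_inv₀, conj_q hq, inv_inv]

-- reversed relations
lemma relAB' : gen q 1 * gen q 0 = q • (gen q 0 * gen q 1) := by
  rw [relAB, smul_smul, mul_inv_cancel₀ (hq0 hq), one_smul]
lemma relAC' : gen q 2 * gen q 0 = q • (gen q 0 * gen q 2) := by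
  rw [relAC, smul_smul, mul_inv_cancel₀ (hq0 hq), one_smul]
lemma relBD' : gen q 3 * gen q 1 = q • (gen q 1 * gen q 3) := by
  rw [relBD, smul_smul, mul_inv_cancel₀ (hq0 hq), one_smul]
lemma relCD' : gen q 3 * gen q 2 = q • (gen q 2 * gen q 3) := by
  rw [relCD, smul_smul, mul_inv_cancel₀ (hq0 hq), one_smul]

omit hq in
lemma relDA (hq : q * (starRingEnd ℂ) q = 1) : gen q 3 * gen q 0 = 1 + q • (gen q 1 * gen q 2) := by
  have h1 := relAD q
  have h2 := relDET q
  have : gen q 3 * gen q 0 = gen q 0 * gen q 3 - (q⁻¹ - q) • (gen q 1 * gen q 2) := by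
    rw [← h1]; abel
  rw [this, ← h2]; module

lemma relDA' : gen q 3 * gen q 0 - q • (gen q 1 * gen q 2) = 1 := by
  rw [relDA hq]; abel

end hq

def ConjOp (q : ℂ) : Type := (SLq q)ᵐᵒᵖ

instance : Ring (ConjOp q) := inferInstanceAs (Ring (SLq q)ᵐᵒᵖ)

instance : Algebra ℂ (ConjOp q) :=
  RingHom.toAlgebra' ((algebraMap ℂ (SLq q)ᵐᵒᵖ).comp (starRingEnd ℂ))
    (fun c x => (Algebra.commutes (A := (SLq q)ᵐᵒᵖ) ((starRingEnd ℂ) c) x))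

def mkC {q : ℂ} (x : SLq q) : ConjOp q := op x
def unC {q : ℂ} (x : ConjOp q) : SLq q := unop (α := SLq q) x

variable {q}

lemma mkC_mul (x y : SLq q) : (mkC x) * mkC y = mkC (y * x) := rfl
lemma mkC_add (x y : SLq q) : (mkC x) + mkC y = mkC (x + y) := rfl
lemma mkC_sub (x y : SLq q) : (mkC x) - mkC y = mkC (x - y) := rfl
lemma unC_mkC (x : SLq q) : unC (mkC x) = x := rfl
lemma mkC_unC (x : ConjOp q) : mkC (unC x) = x := rfl
lemma mkC_one : (mkC (1 : SLq q)) = 1 := rfl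
lemma unC_add (x y : ConjOp q) : unC (x + y) = unC x + unC y := rfl

lemma algebraMap_conjOp (z : ℂ) :
    algebraMap ℂ (ConjOp q) z = mkC (algebraMap ℂ (SLq q) ((starRingEnd ℂ) z)) := rfl

lemma smul_mkC (z : ℂ) (x : SLq q) :
    z • (mkC x) = mkC (((starRingEnd ℂ) z) • x) := by
  rw [Algebra.smul_def, algebraMap_conjOp, mkC_mul, ← Algebra.commutes, ← Algebra.smul_def]

/-- The defining algebra map from the free algebra to the twisted opposite. -/
def F (q : ℂ) : FreeAlgebra ℂ (Fin 4) →ₐ[ℂ] ConjOp q :=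
  FreeAlgebra.lift ℂ (fun i => mkC (gen q i))

lemma F_rel (hq : q * (starRingEnd ℂ) q = 1) : ∀ ⦃x y : FreeAlgebra ℂ (Fin 4)⦄, SLRel q x y → F q x = F q y := by
  intro x y h
  induction h with
  | ab => simp only [F, map_mul, map_smul, FreeAlgebra.lift_ι_apply, mkC_mul, smul_mkC,
      conj_qinv hq]; rw [relAB' hq]
  | ac => simp only [F, map_mul, map_smul, FreeAlgebra.lift_ι_apply, mkC_mul, smul_mkC,
      conj_qinv hq]; rw [relAC' hq]
  | bd => simp only [F, map_mul, map_smul, FreeAlgebra.lift_ι_apply, mkC_mul, smul_mkC,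
      conj_qinv hq]; rw [relBD' hq]
  | cd => simp only [F, map_mul, map_smul, FreeAlgebra.lift_ι_apply, mkC_mul, smul_mkC,
      conj_qinv hq]; rw [relCD' hq]
  | bc => simp only [F, map_mul, FreeAlgebra.lift_ι_apply, mkC_mul]; rw [relBC]
  | ad =>
      simp only [F, map_mul, map_sub, map_smul, FreeAlgebra.lift_ι_apply, mkC_mul, mkC_sub,
        smul_mkC, map_sub, conj_qinv hq, conj_q hq]
      congr 1
      rw [← relBC q, ← neg_sub (gen q 0 * gen q 3), relAD q]; module
  | det =>
      simp only [F, map_mul, map_sub, map_smul, map_one, FreeAlgebra.lift_ι_apply, mkC_mul,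
        mkC_sub, smul_mkC, conj_qinv hq, ← mkC_one]
      congr 1
      rw [← relBC q]; exact relDA' hq

/-- The star as a ring hom to the twisted opposite. -/
def stO (hq : q * (starRingEnd ℂ) q = 1) : SLq q →+* ConjOp q :=
  RingQuot.lift ⟨(F q).toRingHom, F_rel hq⟩

/-- The star structure on `SL_q(2,ℂ)`. -/
def st (hq : q * (starRingEnd ℂ) q = 1) : SLq q → SLq q := fun x => unC (stO hq x)

lemma stO_mk (hq : q * (starRingEnd ℂ) q = 1) (x : FreeAlgebra ℂ (Fin 4)) :
    stO hq (RingQuot.mkAlgHom ℂ (SLRel q) x) = F q x := by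
  have : (RingQuot.mkAlgHom ℂ (SLRel q)) x = RingQuot.mkRingHom (SLRel q) x := by
    rw [← RingQuot.mkAlgHom_coe ℂ]; rfl
  rw [this, stO, RingQuot.lift_mkRingHom_apply]; rfl

lemma st_gen (hq : q * (starRingEnd ℂ) q = 1) (i : Fin 4) : st hq (gen q i) = gen q i := by
  rw [st, gen, stO_mk, F]; simp [FreeAlgebra.lift_ι_apply]; rfl

lemma st_add (hq : q * (starRingEnd ℂ) q = 1) (x y : SLq q) : st hq (x + y) = st hq x + st hq y := by
  simp [st, map_add]; rfl

lemma st_mul (hq : q * (starRingEnd ℂ) q = 1) (x y : SLq q) : st hq (x * y) = st hq y * st hq x := by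
  simp only [st, map_mul]
  rw [show stO hq x = mkC (unC (stO hq x)) from rfl, show stO hq y = mkC (unC (stO hq y)) from rfl,
    mkC_mul]
  rfl

lemma st_one (hq : q * (starRingEnd ℂ) q = 1) : st hq (1 : SLq q) = 1 := by
  simp [st, map_one]; rfl

lemma st_algebraMap (hq : q * (starRingEnd ℂ) q = 1) (z : ℂ) :
    st hq (algebraMap ℂ (SLq q) z) = algebraMap ℂ (SLq q) ((starRingEnd ℂ) z) := by
  have : algebraMap ℂ (SLq q) z = RingQuot.mkAlgHom ℂ (SLRel q) (algebraMap ℂ _ z) := by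
    rw [AlgHom.commutes]
  rw [st, this, stO_mk, AlgHom.commutes, algebraMap_conjOp, unC_mkC]

lemma st_smul (hq : q * (starRingEnd ℂ) q = 1) (z : ℂ) (x : SLq q) :
    st hq (z • x) = ((starRingEnd ℂ) z) • st hq x := by
  rw [Algebra.smul_def, st_mul, st_algebraMap, ← Algebra.commutes, ← Algebra.smul_def]

lemma st_st (hq : q * (starRingEnd ℂ) q = 1) (x : SLq q) : st hq (st hq x) = x := by
  obtain ⟨y, rfl⟩ := RingQuot.mkAlgHom_surjective ℂ (SLRel q) x
  induction y using FreeAlgebra.induction with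
  | grade0 z =>
      rw [AlgHom.commutes, st_algebraMap, st_algebraMap, Complex.conj_conj]
  | grade1 i =>
      rw [← gen, st_gen, st_gen]
  | mul a b ha hb =>
      rw [map_mul, st_mul, st_mul, ha, hb]
  | add a b ha hb =>
      rw [map_add, st_add, st_add, ha, hb]

end SL2R

section SL2Rmain

open SL2R RingQuot

variable {q : ℂ}

lemma SL2R.isStar_st (hq : q * (starRingEnd ℂ) q = 1) : IsStar (st hq) :=
  ⟨st_add hq, st_smul hq, st_mul hq, st_one hq, st_st hq⟩

lemma SL2R.starVals_st (hq : q * (starRingEnd ℂ) q = 1) : StarVals q (st hq) :=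
  ⟨st_gen hq 0, st_gen hq 1, st_gen hq 2, st_gen hq 3⟩

lemma SL2R.st_unique (hq : q * (starRingEnd ℂ) q = 1) (st' : SLq q → SLq q)
    (h1 : IsStar st') (h2 : StarVals q st') (x : SLq q) : st' x = st hq x := by
  obtain ⟨hadd, hsmul, hmul, hone, hinv⟩ := h1
  obtain ⟨hg0, hg1, hg2, hg3⟩ := h2
  obtain ⟨y, rfl⟩ := RingQuot.mkAlgHom_surjective ℂ (SLRel q) x
  induction y using FreeAlgebra.induction with
  | grade0 z =>
      rw [AlgHom.commutes, st_algebraMap hq, Algebra.algebraMap_eq_smul_one, hsmul, hone,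
        ← Algebra.algebraMap_eq_smul_one]
  | grade1 i =>
      rw [show RingQuot.mkAlgHom ℂ (SLRel q) (ι ℂ i) = gen q i from rfl, st_gen hq]
      fin_cases i <;> assumption
  | mul a b ha hb => rw [map_mul, hmul, st_mul hq, ha, hb]
  | add a b ha hb => rw [map_add, hadd, st_add hq, ha, hb]

end SL2Rmain


/-- For `q` of modulus one (`q·q̄ = 1`) there is a unique star structure `★ₛ` on
`SL_q(2,ℂ)` fixing all four generators, and it is a Hopf star structure:
`Δ(x^★) = (★ ⊗ ★)(Δ(x))` for all `x`.  (The real form `SL_q(2,ℝ)`.) -/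
theorem sl2r_star_exists_unique (q : ℂ) (hq : q * (starRingEnd ℂ) q = 1) :
    (∃! st : SLq q → SLq q, IsStar st ∧ StarVals q st) ∧
    (∀ st : SLq q → SLq q, IsStar st ∧ StarVals q st →
      ∀ Δ : SLq q →ₐ[ℂ] (SLq q ⊗[ℂ] SLq q), IsComul q Δ →
        ∃ T : (SLq q ⊗[ℂ] SLq q) → (SLq q ⊗[ℂ] SLq q),
          (∀ u v : SLq q ⊗[ℂ] SLq q, T (u + v) = T u + T v) ∧
          (∀ x y : SLq q, T (x ⊗ₜ[ℂ] y) = st x ⊗ₜ[ℂ] st y) ∧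
          (∀ x : SLq q, Δ (st x) = T (Δ x))) := by
  constructor
  · refine ⟨SL2R.st hq, ⟨SL2R.isStar_st hq, SL2R.starVals_st hq⟩, ?_⟩
    intro st' ⟨h1, h2⟩
    funext x
    exact SL2R.st_unique hq st' h1 h2 x
  · rintro st' ⟨h1, h2⟩ Δ hΔ
    obtain ⟨hadd, hsmul, hmul, hone, hinv⟩ := h1
    obtain ⟨hg0, hg1, hg2, hg3⟩ := h2
    obtain ⟨hΔ0, hΔ1, hΔ2, hΔ3⟩ := hΔ
    have hAlg : ∀ z : ℂ, st' (algebraMap ℂ (SLq q) z) =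
        algebraMap ℂ (SLq q) ((starRingEnd ℂ) z) := fun z => by
      rw [Algebra.algebraMap_eq_smul_one, hsmul, hone, ← Algebra.algebraMap_eq_smul_one]
    let f : SLq q →+ SLq q →+ (SLq q ⊗[ℂ] SLq q) :=
      { toFun := fun m => AddMonoidHom.mk' (fun n => st' m ⊗ₜ[ℂ] st' n)
          (fun n₁ n₂ => show st' m ⊗ₜ[ℂ] st' (n₁ + n₂) = st' m ⊗ₜ[ℂ] st' n₁ + st' m ⊗ₜ[ℂ] st' n₂ by
            rw [hadd, TensorProduct.tmul_add])
        map_zero' := by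
          ext n
          show st' 0 ⊗ₜ[ℂ] st' n = 0
          rw [show st' 0 = 0 by simpa using hadd 0 0, TensorProduct.zero_tmul]
        map_add' := fun m₁ m₂ => by
          ext n
          show st' (m₁ + m₂) ⊗ₜ[ℂ] st' n = st' m₁ ⊗ₜ[ℂ] st' n + st' m₂ ⊗ₜ[ℂ] st' n
          rw [hadd, TensorProduct.add_tmul] }
    let T : (SLq q ⊗[ℂ] SLq q) →+ (SLq q ⊗[ℂ] SLq q) :=
      TensorProduct.liftAddHom f (fun r m n => by
        show st' (r • m) ⊗ₜ[ℂ] st' n = st' m ⊗ₜ[ℂ] st' (r • n)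
        rw [hsmul, hsmul, TensorProduct.smul_tmul])
    have hT_tmul : ∀ x y : SLq q, T (x ⊗ₜ[ℂ] y) = st' x ⊗ₜ[ℂ] st' y := fun x y => rfl
    have hT_mul : ∀ u v : SLq q ⊗[ℂ] SLq q, T (u * v) = T v * T u := by
      intro u v
      induction u using TensorProduct.induction_on with
      | zero => simp
      | tmul x y =>
          induction v using TensorProduct.induction_on with
          | zero => simp
          | tmul x' y' =>
              rw [Algebra.TensorProduct.tmul_mul_tmul, hT_tmul, hT_tmul, hT_tmul,
                Algebra.TensorProduct.tmul_mul_tmul, hmul, hmul]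
          | add u1 u2 ih1 ih2 => rw [mul_add, map_add, ih1, ih2, map_add, add_mul]
      | add u1 u2 ih1 ih2 => rw [add_mul, map_add, ih1, ih2, map_add, mul_add]
    refine ⟨T, fun u v => map_add T u v, hT_tmul, ?_⟩
    intro x
    obtain ⟨y, rfl⟩ := RingQuot.mkAlgHom_surjective ℂ (SLRel q) x
    induction y using FreeAlgebra.induction with
    | grade0 z =>
        rw [AlgHom.commutes, hAlg, AlgHom.commutes, AlgHom.commutes,
          Algebra.TensorProduct.algebraMap_apply, Algebra.TensorProduct.algebraMap_apply,
          hT_tmul, hAlg, hone]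
    | grade1 i =>
        rw [show RingQuot.mkAlgHom ℂ (SLRel q) (ι ℂ i) = gen q i from rfl]
        fin_cases i
        · show Δ (st' (gen q 0)) = T (Δ (gen q 0))
          rw [hg0, hΔ0, map_add, hT_tmul, hT_tmul, hg0, hg1, hg2]
        · show Δ (st' (gen q 1)) = T (Δ (gen q 1))
          rw [hg1, hΔ1, map_add, hT_tmul, hT_tmul, hg0, hg1, hg3]
        · show Δ (st' (gen q 2)) = T (Δ (gen q 2))
          rw [hg2, hΔ2, map_add, hT_tmul, hT_tmul, hg0, hg2, hg3]
        · show Δ (st' (gen q 3)) = T (Δ (gen q 3))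
          rw [hg3, hΔ3, map_add, hT_tmul, hT_tmul, hg1, hg2, hg3]
    | mul a b ha hb =>
        rw [map_mul, hmul, map_mul, ha, hb, ← hT_mul, ← map_mul, ← map_mul]
    | add a b ha hb =>
        rw [map_add, hadd, map_add, ha, hb, ← map_add, ← map_add, ← map_add]
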